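/- Let d be a positive integer, Θ ⊂ ℝ^d compact, and κ ∈ [−1,1]. Let (Ω, F, P) be a probability space carrying an i.i.d. sequence (X_i, Y_i), i ∈ ℕ, of ℝ^d × ℝ-valued random vectors with the same distribution as (X, Y). Define ψ(y, x, θ) = (y − exp(θᵀx))·exp(κ·θᵀx)·x. Assume: (i) there is θ̃₀ in the interior of Θ that is the unique solution in Θ of the population moment equation E[ψ(Y, X, θ)] = 0; (ii) there exists an integrable function α(x, y) with sup_{θ ∈ Θ} ‖(y − exp(θᵀx))·exp(κ·θᵀx)·x‖_∞ ≤ α(x, y) almost surely. Then any sequence of measurable estimators θ̂_n taking values in Θ and satisfying (1/n)·∑_{i=1}^n ψ(Y_i, X_i, θ̂_n) = 0 for all n converges to θ̃₀ in probability as n → ∞. -/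

import Mathlib

open Real MeasureTheory Filter ProbabilityTheory

open Topology

lemma slln_comp {Ω : Type*} [MeasurableSpace Ω] {μ : Measure Ω} [IsProbabilityMeasure μ]
    {α : Type*} [MeasurableSpace α]
    {B : Type*} [NormedAddCommGroup B] [NormedSpace ℝ B] [CompleteSpace B]
    [MeasurableSpace B] [BorelSpace B]
    (Z : ℕ → Ω → α)
    (hindep : iIndepFun Z μ)
    (hident : ∀ i, IdentDistrib (Z i) (Z 0) μ μ)
    (g : α → B) (hg : Measurable g)
    (hint : Integrable (fun ω => g (Z 0 ω)) μ) :
    ∀ᵐ ω ∂μ, Tendsto (fun n : ℕ => (n : ℝ)⁻¹ • ∑ i ∈ Finset.range n, g (Z i ω))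
      atTop (𝓝 (∫ ω, g (Z 0 ω) ∂μ)) :=
  strong_law_ae (μ := μ) (fun i ω => g (Z i ω)) hint
    (fun _ _ hij => (hindep.indepFun hij).comp hg hg)
    (fun i => (hident i).comp hg)


/-- **consistency of generalized PML estimators.** With `Θ ⊂ ℝ^d` compact,
`κ ∈ [-1,1]`, i.i.d. data `(X_i, Y_i)` distributed as `(X_0, Y_0)`, score
`ψ(y, x, θ) = (y - exp (θᵀx)) exp (κ θᵀx) x`, a unique population root `θ̃₀` in the interior
of `Θ`, and a uniform integrable envelope `α(x, y)` for the sup-norm of the score on `Θ`,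
any sequence of `Θ`-valued estimators solving the empirical estimating equations converges
to `θ̃₀` in probability. -/
theorem generalized_pml_consistency (d : ℕ) (hd : 0 < d)
    (Θ : Set (Fin d → ℝ)) (hΘ : IsCompact Θ)
    (κ : ℝ) (hκ : κ ∈ Set.Icc (-1 : ℝ) 1)
    {Ω : Type*} [MeasurableSpace Ω] (μ : Measure Ω) [IsProbabilityMeasure μ]
    (X : ℕ → Ω → (Fin d → ℝ)) (Y : ℕ → Ω → ℝ)
    (hmeas : ∀ i, Measurable (fun ω => (X i ω, Y i ω)))
    (hindep : iIndepFun (fun i ω => (X i ω, Y i ω)) μ)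
    (hident : ∀ i, IdentDistrib (fun ω => (X i ω, Y i ω)) (fun ω => (X 0 ω, Y 0 ω)) μ μ)
    (ψ : ℝ → (Fin d → ℝ) → (Fin d → ℝ) → (Fin d → ℝ))
    (hψ : ∀ y x θ, ψ y x θ
      = fun j => (y - Real.exp (∑ k, θ k * x k)) * Real.exp (κ * ∑ k, θ k * x k) * x j)
    (θt : Fin d → ℝ) (hθt : θt ∈ interior Θ)
    (hsol : ∫ ω, ψ (Y 0 ω) (X 0 ω) θt ∂μ = 0)
    (huniq : ∀ θ ∈ Θ, (∫ ω, ψ (Y 0 ω) (X 0 ω) θ ∂μ) = 0 → θ = θt)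
    (env : (Fin d → ℝ) → ℝ → ℝ)
    (henv_int : Integrable (fun ω => env (X 0 ω) (Y 0 ω)) μ)
    (hdom : ∀ᵐ ω ∂μ, ∀ θ ∈ Θ, ‖ψ (Y 0 ω) (X 0 ω) θ‖ ≤ env (X 0 ω) (Y 0 ω))
    (θhat : ℕ → Ω → (Fin d → ℝ)) (hθhat_meas : ∀ n, Measurable (θhat n))
    (hθhat_mem : ∀ n ω, θhat n ω ∈ Θ)
    (hθhat_zero : ∀ (n : ℕ) (ω : Ω),
      (1 / (n : ℝ)) • ∑ i ∈ Finset.range n, ψ (Y i ω) (X i ω) (θhat n ω) = 0) :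
    TendstoInMeasure μ θhat atTop (fun _ => θt) := by
  classical
  have hθtΘ : θt ∈ Θ := interior_subset hθt
  -- joint continuity of the score
  have hFc : Continuous fun q : ((Fin d → ℝ) × ℝ) × (Fin d → ℝ) => ψ q.1.2 q.1.1 q.2 := by
    have h : (fun q : ((Fin d → ℝ) × ℝ) × (Fin d → ℝ) => ψ q.1.2 q.1.1 q.2)
        = fun q j => (q.1.2 - Real.exp (∑ k, q.2 k * q.1.1 k)) *
          Real.exp (κ * ∑ k, q.2 k * q.1.1 k) * q.1.1 j := by
      funext q; exact hψ _ _ _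
    rw [h]; fun_prop
  have hFc2 : ∀ θ, Continuous fun z : (Fin d → ℝ) × ℝ => ψ z.2 z.1 θ :=
    fun θ => hFc.comp (continuous_id.prodMk continuous_const)
  have hFc3 : ∀ z : (Fin d → ℝ) × ℝ, Continuous fun θ => ψ z.2 z.1 θ :=
    fun z => hFc.comp (continuous_const.prodMk continuous_id)
  set M : (Fin d → ℝ) → (Fin d → ℝ) := fun θ => ∫ ω, ψ (Y 0 ω) (X 0 ω) θ ∂μ with hM_def
  have hint : ∀ θ ∈ Θ, Integrable (fun ω => ψ (Y 0 ω) (X 0 ω) θ) μ := by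
    intro θ hθ
    refine Integrable.mono' henv_int
      (((hFc2 θ).measurable.comp (hmeas 0)).aestronglyMeasurable) ?_
    filter_upwards [hdom] with ω h using h θ hθ
  -- radii and pair sets
  set r : ℕ → ℝ := fun m => 1 / (m + 1) with hr_def
  have hrpos : ∀ m, 0 < r m := fun m => by positivity
  set S : ℕ → Set ((Fin d → ℝ) × (Fin d → ℝ)) :=
    fun m => (Θ ×ˢ Θ) ∩ {p | dist p.1 p.2 ≤ r m} with hS_def
  have hScomp : ∀ m, IsCompact (S m) :=
    fun m => (hΘ.prod hΘ).inter_right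
      (isClosed_le (continuous_fst.dist continuous_snd) continuous_const)
  have hSne : ∀ m, (θt, θt) ∈ S m :=
    fun m => ⟨⟨hθtΘ, hθtΘ⟩, by simp [(hrpos m).le]⟩
  -- countable dense sequences in `S m`
  have hu : ∀ m, ∃ u : ℕ → (Fin d → ℝ) × (Fin d → ℝ),
      (∀ n, u n ∈ S m) ∧ ∀ p ∈ S m, ∀ δ > (0 : ℝ), ∃ n, dist p (u n) < δ := by
    intro m
    have : Nonempty (S m) := ⟨⟨_, hSne m⟩⟩
    obtain ⟨s, hsc, hsd⟩ := TopologicalSpace.exists_countable_dense (S m)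
    obtain ⟨f, hf⟩ := hsc.exists_eq_range hsd.nonempty
    refine ⟨fun n => (f n : _), fun n => (f n).2, ?_⟩
    intro p hp δ hδ
    obtain ⟨q, hq, hqd⟩ := Metric.mem_closure_iff.1 (hsd ⟨p, hp⟩) δ hδ
    rw [hf] at hq
    obtain ⟨n, rfl⟩ := hq
    exact ⟨n, by simpa [Subtype.dist_eq] using hqd⟩
  choose u hu_mem hu_dense using hu
  -- modulus of continuity
  set w : ℕ → (Fin d → ℝ) × ℝ → ℝ :=
    fun m z => ⨆ n, ‖ψ z.2 z.1 (u m n).1 - ψ z.2 z.1 (u m n).2‖ with hw_def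
  have hGc : ∀ z : (Fin d → ℝ) × ℝ,
      Continuous fun p : (Fin d → ℝ) × (Fin d → ℝ) => ‖ψ z.2 z.1 p.1 - ψ z.2 z.1 p.2‖ :=
    fun z => (((hFc3 z).comp continuous_fst).sub ((hFc3 z).comp continuous_snd)).norm
  have hbdd : ∀ (m : ℕ) (z : (Fin d → ℝ) × ℝ), BddAbove (Set.range fun n =>
      ‖ψ z.2 z.1 (u m n).1 - ψ z.2 z.1 (u m n).2‖) := by
    intro m z
    refine BddAbove.mono ?_ (((hScomp m).image (hGc z)).bddAbove)
    exact Set.range_subset_iff.2 fun n => Set.mem_image_of_mem _ (hu_mem m n)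
  have hwle : ∀ (m : ℕ) (z : (Fin d → ℝ) × ℝ) (C : ℝ), (∀ p ∈ S m, ‖ψ z.2 z.1 p.1 - ψ z.2 z.1 p.2‖ ≤ C) → w m z ≤ C :=
    fun m z C h => ciSup_le fun n => h _ (hu_mem m n)
  have hlew : ∀ (m : ℕ) (z : (Fin d → ℝ) × ℝ), ∀ p ∈ S m, ‖ψ z.2 z.1 p.1 - ψ z.2 z.1 p.2‖ ≤ w m z := by
    intro m z p hp
    by_contra hlt
    push_neg at hlt
    obtain ⟨δ, hδ, hδ'⟩ := Metric.continuousAt_iff.1 ((hGc z).continuousAt (x := p))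
      (‖ψ z.2 z.1 p.1 - ψ z.2 z.1 p.2‖ - w m z) (by linarith)
    obtain ⟨n, hn⟩ := hu_dense m p hp δ hδ
    have h1 := hδ' (x := u m n) (by rwa [dist_comm] at hn)
    have h2 : ‖ψ z.2 z.1 (u m n).1 - ψ z.2 z.1 (u m n).2‖ ≤ w m z := le_ciSup (hbdd m z) n
    rw [Real.dist_eq, abs_lt] at h1
    linarith
  have hw0 : ∀ (m : ℕ) (z : (Fin d → ℝ) × ℝ), 0 ≤ w m z :=
    fun m z => (norm_nonneg _).trans (le_ciSup (hbdd m z) 0)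
  have hwmeas : ∀ m, Measurable (w m) := by
    intro m
    exact Measurable.iSup fun n => ((hFc2 (u m n).1).sub (hFc2 (u m n).2)).norm.measurable
  have hwdom : ∀ᵐ ω ∂μ, ∀ m, w m (X 0 ω, Y 0 ω) ≤ 2 * env (X 0 ω) (Y 0 ω) := by
    filter_upwards [hdom] with ω h
    intro m
    refine hwle m _ _ ?_
    rintro ⟨p1, p2⟩ ⟨⟨h1, h2⟩, -⟩
    calc ‖ψ (Y 0 ω) (X 0 ω) p1 - ψ (Y 0 ω) (X 0 ω) p2‖
        ≤ ‖ψ (Y 0 ω) (X 0 ω) p1‖ + ‖ψ (Y 0 ω) (X 0 ω) p2‖ := norm_sub_le _ _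
      _ ≤ env (X 0 ω) (Y 0 ω) + env (X 0 ω) (Y 0 ω) := add_le_add (h p1 h1) (h p2 h2)
      _ = 2 * env (X 0 ω) (Y 0 ω) := (two_mul _).symm
  have hwint : ∀ m, Integrable (fun ω => w m (X 0 ω, Y 0 ω)) μ := by
    intro m
    refine Integrable.mono' (henv_int.const_mul 2)
      (((hwmeas m).comp (hmeas 0)).aestronglyMeasurable) ?_
    filter_upwards [hwdom] with ω h
    rw [Real.norm_eq_abs, abs_of_nonneg (hw0 m _)]
    exact h m
  set W : ℕ → ℝ := fun m => ∫ ω, w m (X 0 ω, Y 0 ω) ∂μ with hW_def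
  -- pointwise convergence of the modulus to 0
  have hwtend : ∀ z : (Fin d → ℝ) × ℝ, Tendsto (fun m => w m z) atTop (𝓝 0) := by
    intro z
    rw [Metric.tendsto_atTop]
    intro ε hε
    obtain ⟨δ, hδ, hδ'⟩ := Metric.uniformContinuousOn_iff_le.1
      (hΘ.uniformContinuousOn_of_continuous (hFc3 z).continuousOn) (ε / 2) (half_pos hε)
    obtain ⟨N, hN⟩ := exists_nat_gt (1 / δ)
    refine ⟨N, fun m hm => ?_⟩
    have hrm : r m ≤ δ := by
      rw [hr_def]
      rw [div_le_iff₀ (by positivity)]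
      have h2 : (1 : ℝ) / δ < (m : ℝ) + 1 :=
        hN.trans_le (by exact_mod_cast Nat.le_succ_of_le hm)
      have := (div_lt_iff₀ hδ).1 h2
      linarith
    have hwm : w m z ≤ ε / 2 := by
      refine hwle m z _ ?_
      rintro ⟨p1, p2⟩ ⟨⟨h1, h2⟩, hdist⟩
      have := hδ' p1 h1 p2 h2 (le_trans hdist hrm)
      rwa [dist_eq_norm] at this
    rw [Real.dist_eq, sub_zero, abs_of_nonneg (hw0 m z)]
    linarith
  have hWtend : Tendsto W atTop (𝓝 0) := by
    have h0 : (0 : ℝ) = ∫ _ : Ω, (0 : ℝ) ∂μ := by simp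
    rw [hW_def, h0]
    refine tendsto_integral_of_dominated_convergence
      (fun ω => 2 * env (X 0 ω) (Y 0 ω))
      (fun m => ((hwmeas m).comp (hmeas 0)).aestronglyMeasurable)
      (henv_int.const_mul 2) ?_ ?_
    · intro m
      filter_upwards [hwdom] with ω h
      rw [Real.norm_eq_abs, abs_of_nonneg (hw0 m _)]
      exact h m
    · exact Eventually.of_forall fun ω => hwtend _
  have hW0 : ∀ m, 0 ≤ W m := fun m => integral_nonneg fun ω => hw0 m _
  -- continuity estimate for M
  have hMdiff : ∀ m, ∀ p ∈ S m, ‖M p.1 - M p.2‖ ≤ W m := by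
    intro m p hp
    rw [hM_def]
    rw [← integral_sub (hint p.1 hp.1.1) (hint p.2 hp.1.2)]
    exact norm_integral_le_of_norm_le (hwint m)
      (Eventually.of_forall fun ω => hlew m (X 0 ω, Y 0 ω) p hp)
  have hMcont : ContinuousOn M Θ := by
    intro θ hθ
    rw [Metric.continuousWithinAt_iff]
    intro ε hε
    obtain ⟨m, hm⟩ : ∃ m, W m < ε := (hWtend.eventually_lt_const hε).exists
    refine ⟨r m, hrpos m, fun θ' hθ' hd => ?_⟩
    have : ‖M θ' - M θ‖ ≤ W m := hMdiff m (θ', θ) ⟨⟨hθ', hθ⟩, hd.le⟩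
    rw [dist_eq_norm]
    linarith
  -- finite nets
  have hnet : ∀ m, ∃ t : Finset (Fin d → ℝ), (∀ θ ∈ t, θ ∈ Θ) ∧
      Θ ⊆ ⋃ θ ∈ t, Metric.ball θ (r m) := by
    intro m
    obtain ⟨t, h1, h2⟩ := hΘ.elim_nhds_subcover (fun θ => Metric.ball θ (r m))
      (fun θ _ => Metric.ball_mem_nhds θ (hrpos m))
    exact ⟨t, h1, h2⟩
  choose t htΘ htcov using hnet
  -- strong laws
  have hslln_w : ∀ᵐ ω ∂μ, ∀ m, Tendsto
      (fun n : ℕ => (n : ℝ)⁻¹ • ∑ i ∈ Finset.range n, w m (X i ω, Y i ω))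
      atTop (𝓝 (W m)) := by
    rw [ae_all_iff]
    intro m
    exact slln_comp _ hindep hident (w m) (hwmeas m) (hwint m)
  have hslln_pt : ∀ᵐ ω ∂μ, ∀ m, ∀ θ ∈ (t m : Set (Fin d → ℝ)), Tendsto
      (fun n : ℕ => (n : ℝ)⁻¹ • ∑ i ∈ Finset.range n, ψ (Y i ω) (X i ω) θ)
      atTop (𝓝 (M θ)) := by
    rw [ae_all_iff]
    intro m
    rw [ae_ball_iff (t m).countable_toSet]
    intro θ hθ
    exact slln_comp _ hindep hident (fun z : (Fin d → ℝ) × ℝ => ψ z.2 z.1 θ)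
      (hFc2 θ).measurable (hint θ (htΘ m θ hθ))
  -- uniform law of large numbers
  have hULLN : ∀ᵐ ω ∂μ, ∀ δ > (0 : ℝ), ∀ᶠ n : ℕ in atTop, ∀ θ ∈ Θ,
      ‖(n : ℝ)⁻¹ • ∑ i ∈ Finset.range n, ψ (Y i ω) (X i ω) θ - M θ‖ < δ := by
    filter_upwards [hslln_w, hslln_pt] with ω hw' hpt
    intro δ hδ
    obtain ⟨m, hm⟩ : ∃ m, W m < δ / 4 :=
      (hWtend.eventually_lt_const (by positivity)).exists
    have h1 : ∀ᶠ n : ℕ in atTop,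
        (n : ℝ)⁻¹ • ∑ i ∈ Finset.range n, w m (X i ω, Y i ω) < δ / 2 :=
      (hw' m).eventually_lt_const (by linarith)
    have h2 : ∀ᶠ n : ℕ in atTop, ∀ θ ∈ t m,
        ‖(n : ℝ)⁻¹ • ∑ i ∈ Finset.range n, ψ (Y i ω) (X i ω) θ - M θ‖ < δ / 4 := by
      rw [Finset.eventually_all]
      intro θ hθ
      have h3 := Metric.tendsto_atTop.1 (hpt m θ hθ) (δ / 4) (by positivity)
      obtain ⟨N, hN⟩ := h3
      refine eventually_atTop.2 ⟨N, fun n hn => ?_⟩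
      have := hN n hn
      rwa [dist_eq_norm] at this
    filter_upwards [h1, h2] with n hn1 hn2
    intro θ hθ
    obtain ⟨j, hj, hjball⟩ : ∃ j ∈ t m, θ ∈ Metric.ball j (r m) := by
      have := htcov m hθ
      simpa using this
    have hjΘ : j ∈ Θ := htΘ m j hj
    have hdj : dist θ j ≤ r m := (Metric.mem_ball.1 hjball).le
    have key1 : ‖((n : ℝ)⁻¹ • ∑ i ∈ Finset.range n, ψ (Y i ω) (X i ω) θ)
        - (n : ℝ)⁻¹ • ∑ i ∈ Finset.range n, ψ (Y i ω) (X i ω) j‖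
        ≤ (n : ℝ)⁻¹ • ∑ i ∈ Finset.range n, w m (X i ω, Y i ω) := by
      rw [← smul_sub, ← Finset.sum_sub_distrib, norm_smul, smul_eq_mul]
      have hsum : ‖∑ i ∈ Finset.range n,
          (ψ (Y i ω) (X i ω) θ - ψ (Y i ω) (X i ω) j)‖
          ≤ ∑ i ∈ Finset.range n, w m (X i ω, Y i ω) := by
        refine norm_sum_le_of_le _ fun i _ => ?_
        exact hlew m (X i ω, Y i ω) (θ, j) ⟨⟨hθ, hjΘ⟩, hdj⟩
      have hnn : ‖(n : ℝ)⁻¹‖ = (n : ℝ)⁻¹ := by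
        rw [Real.norm_eq_abs, abs_of_nonneg (by positivity)]
      rw [hnn]
      exact mul_le_mul_of_nonneg_left hsum (by positivity)
    have hdj' : dist j θ ≤ r m := by rw [dist_comm]; exact hdj
    have key3 : ‖M j - M θ‖ ≤ W m :=
      hMdiff m (j, θ) ⟨⟨hjΘ, hθ⟩, hdj'⟩
    have hA : ‖((n : ℝ)⁻¹ • ∑ i ∈ Finset.range n, ψ (Y i ω) (X i ω) θ)
        - (n : ℝ)⁻¹ • ∑ i ∈ Finset.range n, ψ (Y i ω) (X i ω) j‖ < δ / 2 :=
      key1.trans_lt hn1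
    have hB := hn2 j hj
    have hC : ‖M j - M θ‖ < δ / 4 := key3.trans_lt hm
    calc ‖(n : ℝ)⁻¹ • ∑ i ∈ Finset.range n, ψ (Y i ω) (X i ω) θ - M θ‖
        = ‖(((n : ℝ)⁻¹ • ∑ i ∈ Finset.range n, ψ (Y i ω) (X i ω) θ)
            - (n : ℝ)⁻¹ • ∑ i ∈ Finset.range n, ψ (Y i ω) (X i ω) j)
          + (((n : ℝ)⁻¹ • ∑ i ∈ Finset.range n, ψ (Y i ω) (X i ω) j) - M j)
          + (M j - M θ)‖ := by congr 1; abel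
      _ ≤ ‖((n : ℝ)⁻¹ • ∑ i ∈ Finset.range n, ψ (Y i ω) (X i ω) θ)
            - (n : ℝ)⁻¹ • ∑ i ∈ Finset.range n, ψ (Y i ω) (X i ω) j‖
          + ‖((n : ℝ)⁻¹ • ∑ i ∈ Finset.range n, ψ (Y i ω) (X i ω) j) - M j‖
          + ‖M j - M θ‖ := norm_add₃_le
      _ < δ / 2 + δ / 4 + δ / 4 := add_lt_add (add_lt_add hA hB) hC
      _ = δ := by ring
  -- almost sure convergence of the estimators
  have hae : ∀ᵐ ω ∂μ, Tendsto (fun n => θhat n ω) atTop (𝓝 θt) := by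
    filter_upwards [hULLN] with ω hω
    rw [Metric.tendsto_atTop]
    intro ε hε
    by_cases hK : (Θ ∩ {θ | ε ≤ dist θ θt}).Nonempty
    · have hKcl : IsClosed {θ : Fin d → ℝ | ε ≤ dist θ θt} :=
        isClosed_le continuous_const (continuous_id.dist continuous_const)
      obtain ⟨θs, hθsK, hmin⟩ := (hΘ.inter_right hKcl).exists_isMinOn hK
        (continuous_norm.comp_continuousOn (hMcont.mono Set.inter_subset_left))
      have hc : 0 < ‖M θs‖ := by
        rcases eq_or_ne (M θs) 0 with h0 | h0
        · exfalso
          have := huniq θs hθsK.1 h0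
          have h2 := hθsK.2
          rw [this] at h2
          simp at h2
          linarith
        · exact norm_pos_iff.2 h0
      obtain ⟨N, hN⟩ := eventually_atTop.1 (hω ‖M θs‖ hc)
      refine ⟨N, fun n hn => ?_⟩
      by_contra hdist
      push_neg at hdist
      have hK' : θhat n ω ∈ Θ ∩ {θ | ε ≤ dist θ θt} := ⟨hθhat_mem n ω, hdist⟩
      have h0 : (n : ℝ)⁻¹ • ∑ i ∈ Finset.range n, ψ (Y i ω) (X i ω) (θhat n ω) = 0 := by
        have := hθhat_zero n ω
        rwa [one_div] at this
      have hlt := hN n hn (θhat n ω) (hθhat_mem n ω)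
      rw [h0, zero_sub, norm_neg] at hlt
      exact absurd hlt (not_lt.2 (hmin hK'))
    · refine ⟨0, fun n _ => ?_⟩
      by_contra h
      push_neg at h
      exact hK ⟨θhat n ω, hθhat_mem n ω, h⟩
  exact tendstoInMeasure_of_tendsto_ae (fun n => (hθhat_meas n).aestronglyMeasurable) hae
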